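/- (Main Theorem) Let 2 < n < 4, R > 0, p = (n+2)/(n−2), and λ ≤ n²(n−1)/(4(n+2)). Then the boundary value problem −u''(x) − (n−1)·coth(x)·u'(x) = λ·u(x) + |u(x)|^{p−1}·u(x) on (0,R), with u'(0) = 0 and u(R) = 0, has no nontrivial regular solution. -/

import Mathlib

open Real
set_option maxHeartbeats 2000000




theorem abs_rpow_hasDerivAt (q : ℝ) (hq : 1 < q) (y : ℝ) :
    HasDerivAt (fun z : ℝ => |z| ^ q) (q * |y| ^ (q - 2) * y) y := by
  rcases lt_trichotomy y 0 with hy | rfl | hy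
  · have h : HasDerivAt (fun z : ℝ => |z|) (-1) y := by
      have h' : HasDerivAt (fun z : ℝ => -z) (-1) y := (hasDerivAt_id y).neg
      refine h'.congr_of_eventuallyEq ?_
      filter_upwards [gt_mem_nhds hy] with z hz
      rw [abs_of_neg hz]
    have h2 := h.rpow_const (p := q) (Or.inl (by simp [abs_ne_zero, hy.ne]))
    convert h2 using 1
    have he : |y| ^ (q-2) * y = -(|y| ^ (q-1)) := by
      rw [abs_of_neg hy, show q - 1 = (q-2) + 1 by ring,
        Real.rpow_add (by linarith : (0:ℝ) < -y), Real.rpow_one]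
      ring
    rw [mul_assoc, he]; ring
  · have h0 : |(0:ℝ)| ^ q = 0 := by
      simp [Real.zero_rpow (by linarith : q ≠ 0)]
    rw [hasDerivAt_iff_tendsto_slope]
    have key : ∀ z : ℝ, z ≠ 0 → |slope (fun z : ℝ => |z| ^ q) 0 z| = |z| ^ (q - 1) := by
      intro z hz
      rw [slope_def_field]
      simp only [h0, sub_zero]
      rw [div_eq_mul_inv, abs_mul, abs_inv, abs_of_nonneg (Real.rpow_nonneg (abs_nonneg z) q),
        show q = (q - 1) + 1 by ring, Real.rpow_add (abs_pos.2 hz), Real.rpow_one]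
      field_simp
      congr 1; ring
    have hlim : Filter.Tendsto (fun z : ℝ => |z| ^ (q - 1)) (nhdsWithin 0 {(0:ℝ)}ᶜ) (nhds 0) := by
      have hcont : ContinuousAt (fun z : ℝ => |z| ^ (q - 1)) 0 := by
        exact (Real.continuousAt_rpow_const _ _ (Or.inr (by linarith))).comp
          continuous_abs.continuousAt
      have := hcont.tendsto
      rw [show |(0:ℝ)| ^ (q-1) = 0 by
        simp [Real.zero_rpow (by linarith : q - 1 ≠ 0)]] at this
      exact this.mono_left nhdsWithin_le_nhds
    rw [show q * |(0:ℝ)| ^ (q-2) * 0 = 0 by ring]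
    apply squeeze_zero_norm' _ hlim
    filter_upwards [self_mem_nhdsWithin] with z hz
    rw [Real.norm_eq_abs, key z hz]
  · have h : HasDerivAt (fun z : ℝ => |z|) 1 y := by
      refine (hasDerivAt_id y).congr_of_eventuallyEq ?_
      filter_upwards [lt_mem_nhds hy] with z hz
      simp [abs_of_pos hz]
    have h2 := h.rpow_const (p := q) (Or.inl (by simp [abs_ne_zero, hy.ne']))
    convert h2 using 1
    rw [abs_of_pos hy, show q - 1 = (q-2) + 1 by ring, Real.rpow_add hy, Real.rpow_one]
    ring



theorem deriv_main (n lam p κ : ℝ) (hn2 : 2 < n) (hn4 : n < 4)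
    (hp : p = (n+2)/(n-2))
    (u u' u'' : ℝ → ℝ) (x : ℝ) (hx : 0 < x)
    (hU : HasDerivAt u (u' x) x) (hU' : HasDerivAt u' (u'' x) x)
    (habsd : HasDerivAt (fun t => |u t| ^ (p+1))
      ((p+1) * |u x| ^ (p-1) * u x * u' x) x)
    (hode : -u'' x - (n - 1) * (Real.cosh x / Real.sinh x) * u' x
      = lam * u x + |u x| ^ (p - 1) * u x) :
    HasDerivAt (fun t =>
      (Real.sinh t ^ n / Real.cosh t) *
        ((u' t ^ 2 + lam * u t ^ 2) / 2 + |u t| ^ (p+1) / (p+1) - κ * u t ^ 2)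
      + ((n-2)/(2*n)) * (Real.sinh t ^ (n-1) * (n * Real.cosh t ^ 2 - Real.sinh t ^ 2)
          / Real.cosh t ^ 2) * (u t * u' t)
      + ((n-2)/n) * (Real.sinh t ^ n * (Real.cosh t ^ 2 - Real.sinh t ^ 2)
          / Real.cosh t ^ 3) * (u t ^ 2 / 2))
      (-((n-1)/n * Real.sinh x ^ (n-1) * Real.sinh x ^ 2 / Real.cosh x ^ 2) * u' x ^ 2
       + ( lam/n * Real.sinh x ^ (n-1) * (n * Real.cosh x ^ 2 - Real.sinh x ^ 2) / Real.cosh x ^ 2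
         + (n-2)/(2*n) * ( Real.sinh x ^ (n-1) * (n * Real.cosh x ^ 2 - Real.sinh x ^ 2) / Real.cosh x ^ 2
             - Real.sinh x ^ (n-1) * Real.sinh x ^ 2 * ((n+2) * Real.cosh x ^ 2 - 3 * Real.sinh x ^ 2) / Real.cosh x ^ 4 )
         - κ * Real.sinh x ^ (n-1) * (n * Real.cosh x ^ 2 - Real.sinh x ^ 2) / Real.cosh x ^ 2 ) * u x ^ 2
       - 2 * κ * (Real.sinh x ^ n / Real.cosh x) * (u x * u' x)) x := by
  have hs : 0 < Real.sinh x := Real.sinh_pos_iff.2 hx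
  have hc : (0:ℝ) < Real.cosh x := Real.cosh_pos x
  have hn0 : n ≠ 0 := by linarith
  have hn2' : n - 2 ≠ 0 := by linarith
  have hsinh := Real.hasDerivAt_sinh x
  have hcosh := Real.hasDerivAt_cosh x
  have hsn : HasDerivAt (fun t => Real.sinh t ^ n)
      (Real.cosh x * n * Real.sinh x ^ (n-1)) x :=
    hsinh.rpow_const (Or.inr (by linarith))
  have hsn1 : HasDerivAt (fun t => Real.sinh t ^ (n-1))
      (Real.cosh x * (n-1) * Real.sinh x ^ (n-2)) x := by
    have h := hsinh.rpow_const (p := n-1) (Or.inr (by linarith))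
    simpa [show n - 1 - 1 = n - 2 by ring] using h
  have hs2 := hsinh.pow 2
  have hc2 := hcosh.pow 2
  have hc3 := hcosh.pow 3
  have hE := (((hU'.pow 2).add ((hU.pow 2).const_mul lam)).div_const 2).add
      (habsd.div_const (p+1)) |>.sub ((hU.pow 2).const_mul κ)
  have h1 := (hsn.div hcosh hc.ne').mul hE
  have hA2i := (hsn1.mul ((hc2.const_mul n).sub hs2)).div hc2 (pow_ne_zero 2 hc.ne')
  have h2 := (hA2i.const_mul ((n-2)/(2*n))).mul (hU.mul hU')
  have hA3i := (hsn.mul (hc2.sub hs2)).div hc3 (pow_ne_zero 3 hc.ne')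
  have h3 := (hA3i.const_mul ((n-2)/n)).mul ((hU.pow 2).div_const 2)
  have H := (h1.add h2).add h3
  refine H.congr_deriv ?_
  symm
  simp only [Pi.add_apply, Pi.sub_apply, Pi.mul_apply, Pi.div_apply, Pi.pow_apply]
  have hode' : u'' x = -(n-1) * (Real.cosh x / Real.sinh x) * u' x - lam * u x
      - |u x| ^ (p-1) * u x := by linarith
  have hpe : p + 1 = 2*n/(n-2) := by rw [hp]; field_simp; ring
  have h2s : Real.sinh x ^ (2:ℝ) = Real.sinh x ^ (2:ℕ) := by
    rw [show (2:ℝ) = ((2:ℕ):ℝ) by norm_num, Real.rpow_natCast]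
  have e1 : Real.sinh x ^ (n-1) = Real.sinh x ^ (n-2) * Real.sinh x := by
    have h := Real.rpow_add hs (n-2) 1
    rw [Real.rpow_one] at h
    rw [show n - 1 = n - 2 + 1 by ring, h]
  have e2 : Real.sinh x ^ n = Real.sinh x ^ (n-2) * Real.sinh x ^ 2 := by
    have h := Real.rpow_add hs (n-2) 2
    rw [h2s] at h
    nth_rewrite 1 [show n = n - 2 + 2 by ring]
    rw [h]
  have habs2 : |u x| ^ (p+1) = |u x| ^ (p-1) * (u x * u x) := by
    have hne : (p-1) + 2 ≠ 0 := by
      rw [hp]; intro h; apply hn2'; field_simp at h; nlinarith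
    have h22 : |u x| ^ (2:ℝ) = u x * u x := by
      rw [show (2:ℝ) = ((2:ℕ):ℝ) by norm_num, Real.rpow_natCast, sq_abs, sq]
    have h := Real.rpow_add' (abs_nonneg (u x)) hne
    rw [h22] at h
    rw [show p + 1 = p - 1 + 2 by ring, h]
  have hp1 : p + 1 ≠ 0 := by rw [hpe]; positivity
  rw [hode', e1, e2, habs2, hpe]
  push_cast
  field_simp
  have hpy : Real.cosh x ^ 2 = Real.sinh x ^ 2 + 1 := Real.cosh_sq x
  linear_combination ((-1024:ℝ) * n ^ 8 * Real.sinh x ^ (n-2) * Real.sinh x ^ 4 * Real.cosh x ^ 28 * u x * u' x + (1536:ℝ) * n ^ 8 * Real.sinh x ^ (n-2) * Real.sinh x ^ 5 * Real.cosh x ^ 27 * u x ^ 2 + (-512:ℝ) * n ^ 9 * Real.sinh x ^ (n-2) * Real.sinh x ^ 3 * Real.cosh x ^ 29 * u x ^ 2 + (512:ℝ) * n ^ 9 * Real.sinh x ^ (n-2) * Real.sinh x ^ 4 * Real.cosh x ^ 28 * u x * u' x + (-768:ℝ) * n ^ 9 * Real.sinh x ^ (n-2) * Real.sinh x ^ 5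 * Real.cosh x ^ 27 * u x ^ 2 + (256:ℝ) * n ^ 10 * Real.sinh x ^ (n-2) * Real.sinh x ^ 3 * Real.cosh x ^ 29 * u x ^ 2 + Real.sinh x ^ (n-2) * (u x * u' x * Real.sinh x ^ 4 * Real.cosh x ^ 28 * (1024 * n ^ 8 - 512 * n ^ 9) + u x ^ 2 * Real.sinh x ^ 3 * Real.cosh x ^ 27 * ((512 * n ^ 9 - 256 * n ^ 10) * Real.cosh x ^ 2 + (768 * n ^ 9 - 1536 * n ^ 8) * Real.sinh x ^ 2))) * hpy



theorem kappa_exists (n lam : ℝ) (hn2 : 2 < n) (hn4 : n < 4)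
    (hlam : lam ≤ n ^ 2 * (n - 1) / (4 * (n + 2))) :
    ∃ κ : ℝ, n/(n-1)*κ^2 - n*κ + lam + (n-2)/2 < 0 ∧
      n/(n-1)*κ^2 - (n-1)*κ + lam*(n-1)/n ≤ 0 := by
  have h1 : (0:ℝ) < n - 1 := by linarith
  have h2 : (0:ℝ) < n := by linarith
  have h3 : (0:ℝ) < n + 2 := by linarith
  have hlam' : lam * (4*(n+2)) ≤ n^2*(n-1) := by
    rw [div_eq_mul_inv] at hlam
    calc lam * (4*(n+2)) ≤ (n^2*(n-1) * (4*(n+2))⁻¹) * (4*(n+2)) := by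
          apply mul_le_mul_of_nonneg_right hlam (by positivity)
      _ = n^2*(n-1) := by field_simp
  rcases le_or_gt n (5/2) with hn | hn
  · refine ⟨(n-1)^2/(2*n), ?_, ?_⟩
    · have heq : n/(n-1)*((n-1)^2/(2*n))^2 - n*((n-1)^2/(2*n)) + lam + (n-2)/2
          = ((n-1)^3 - 2*n*(n-1)^2 + 4*n*lam + 2*n*(n-2)) / (4*n) := by
        field_simp; ring
      rw [heq]
      apply div_neg_of_neg_of_pos _ (by positivity)
      nlinarith [mul_pos h2 h3, mul_pos h1 h2, mul_pos (mul_pos h1 h1) h2]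
    · have heq : n/(n-1)*((n-1)^2/(2*n))^2 - (n-1)*((n-1)^2/(2*n)) + lam*(n-1)/n
          = (4*lam*(n-1) - (n-1)^3) / (4*n) := by
        field_simp; ring
      rw [heq]
      apply div_nonpos_of_nonpos_of_nonneg _ (by positivity)
      nlinarith [mul_pos h2 h3, mul_pos h1 h2, mul_pos (mul_pos h1 h1) h2]
  · refine ⟨(3*n^2-n-8)/(4*(n+2)), ?_, ?_⟩
    · have heq : n/(n-1)*((3*n^2-n-8)/(4*(n+2)))^2 - n*((3*n^2-n-8)/(4*(n+2))) + lam + (n-2)/2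
          = (n*(3*n^2-n-8)^2 - 4*n*(3*n^2-n-8)*(n-1)*(n+2) + (16*lam + 8*(n-2))*((n-1)*(n+2)^2))
            / (16*(n-1)*(n+2)^2) := by
        field_simp; ring
      rw [heq]
      apply div_neg_of_neg_of_pos _ (by positivity)
      nlinarith [mul_pos h2 h3, mul_pos h1 h2, sq_nonneg (n-3), mul_pos (mul_pos h1 h2) h3,
        mul_pos (sub_pos.2 hn) (sub_pos.2 hn4), sq_nonneg ((n-5/2)*(n-4)), sq_nonneg (n*(n-1))]
    · have heq : n/(n-1)*((3*n^2-n-8)/(4*(n+2)))^2 - (n-1)*((3*n^2-n-8)/(4*(n+2))) + lam*(n-1)/n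
          = (n^2*(3*n^2-n-8)^2 - 4*n*(3*n^2-n-8)*((n-1)^2*(n+2)) + 16*lam*((n-1)^2*(n+2)^2))
            / (16*n*(n-1)*(n+2)^2) := by
        field_simp; ring
      rw [heq]
      apply div_nonpos_of_nonpos_of_nonneg _ (by positivity)
      have hd : (0:ℝ) < n - 5/2 := by linarith
      have hl2 : 16*lam*((n-1)^2*(n+2)^2) ≤ 4*n^2*(n-1)^3*(n+2) := by
        nlinarith [mul_le_mul_of_nonneg_left hlam' (show (0:ℝ) ≤ 4*(n-1)^2*(n+2) by positivity)]
      nlinarith [hl2, mul_pos h2 (pow_pos hd 5), mul_pos h2 (pow_pos hd 4),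
        mul_pos h2 (pow_pos hd 3), mul_pos h2 (pow_pos hd 2), mul_pos h2 hd]



theorem bracket_neg (n lam κ x : ℝ) (hn2 : 2 < n) (hn4 : n < 4) (hx : 0 < x)
    (hq0 : n/(n-1)*κ^2 - n*κ + lam + (n-2)/2 < 0)
    (hq1 : n/(n-1)*κ^2 - (n-1)*κ + lam*(n-1)/n ≤ 0) :
    lam/n * Real.sinh x ^ (n-1) * (n * Real.cosh x ^ 2 - Real.sinh x ^ 2) / Real.cosh x ^ 2
      + (n-2)/(2*n) * ( Real.sinh x ^ (n-1) * (n * Real.cosh x ^ 2 - Real.sinh x ^ 2) / Real.cosh x ^ 2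
          - Real.sinh x ^ (n-1) * Real.sinh x ^ 2 * ((n+2) * Real.cosh x ^ 2 - 3 * Real.sinh x ^ 2) / Real.cosh x ^ 4 )
      - κ * Real.sinh x ^ (n-1) * (n * Real.cosh x ^ 2 - Real.sinh x ^ 2) / Real.cosh x ^ 2
      + n/(n-1)*κ^2 * Real.sinh x ^ (n-1) < 0 := by
  have hs : 0 < Real.sinh x := Real.sinh_pos_iff.2 hx
  have hc1 : 1 < Real.cosh x := by
    have := Real.cosh_sq x
    nlinarith [Real.cosh_pos x, sq_nonneg (Real.sinh x)]
  have hc : (0:ℝ) < Real.cosh x := by linarith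
  have hsn1 : 0 < Real.sinh x ^ (n-1) := Real.rpow_pos_of_pos hs _
  have hn1 : (0:ℝ) < n - 1 := by linarith
  have hn0 : (0:ℝ) < n := by linarith
  set y : ℝ := 1 / Real.cosh x ^ 2 with hy
  have hy0 : 0 < y := by positivity
  have hy1 : y < 1 := by
    rw [hy, div_lt_one (by positivity)]
    nlinarith
  have hs2 : Real.sinh x ^ 2 = Real.cosh x ^ 2 - 1 := by
    have := Real.cosh_sq x; linarith
  have key : lam/n * Real.sinh x ^ (n-1) * (n * Real.cosh x ^ 2 - Real.sinh x ^ 2) / Real.cosh x ^ 2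
      + (n-2)/(2*n) * ( Real.sinh x ^ (n-1) * (n * Real.cosh x ^ 2 - Real.sinh x ^ 2) / Real.cosh x ^ 2
          - Real.sinh x ^ (n-1) * Real.sinh x ^ 2 * ((n+2) * Real.cosh x ^ 2 - 3 * Real.sinh x ^ 2) / Real.cosh x ^ 4 )
      - κ * Real.sinh x ^ (n-1) * (n * Real.cosh x ^ 2 - Real.sinh x ^ 2) / Real.cosh x ^ 2
      + n/(n-1)*κ^2 * Real.sinh x ^ (n-1)
      = Real.sinh x ^ (n-1) * ((1-y) * (n/(n-1)*κ^2 - (n-1)*κ + lam*(n-1)/n)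
          + y * (n/(n-1)*κ^2 - n*κ + lam + (n-2)/2) + (3*(n-2)/(2*n)) * (y*(y-1))) := by
    rw [hs2, hy]
    field_simp
    ring
  rw [key]
  apply mul_neg_of_pos_of_neg hsn1
  have t1 : y * (n/(n-1)*κ^2 - n*κ + lam + (n-2)/2) < 0 := mul_neg_of_pos_of_neg hy0 hq0
  have t2 : (1-y) * (n/(n-1)*κ^2 - (n-1)*κ + lam*(n-1)/n) ≤ 0 :=
    mul_nonpos_of_nonneg_of_nonpos (by linarith) hq1
  have hn2' : (0:ℝ) < n - 2 := by linarith
  have t3 : (3*(n-2)/(2*n)) * (y*(y-1)) ≤ 0 :=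
    mul_nonpos_of_nonneg_of_nonpos (by positivity)
      (mul_nonpos_of_nonneg_of_nonpos hy0.le (by linarith))
  linarith





theorem main_theorem (n R lam : ℝ) (hn2 : 2 < n) (hn4 : n < 4) (hR : 0 < R)
    (p : ℝ) (hp : p = (n + 2) / (n - 2))
    (hlam : lam ≤ n ^ 2 * (n - 1) / (4 * (n + 2)))
    (u u' u'' : ℝ → ℝ)
    (hu : ∀ x ∈ Set.Icc (0:ℝ) R, HasDerivAt u (u' x) x)
    (hu' : ∀ x ∈ Set.Icc (0:ℝ) R, HasDerivAt u' (u'' x) x)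
    (hu'' : ContinuousOn u'' (Set.Icc (0:ℝ) R))
    (hode : ∀ x ∈ Set.Ioo (0:ℝ) R,
      -u'' x - (n - 1) * (Real.cosh x / Real.sinh x) * u' x
        = lam * u x + |u x| ^ (p - 1) * u x)
    (hu'0 : u' 0 = 0) (huR : u R = 0)
    (hnontriv : ∃ x ∈ Set.Icc (0:ℝ) R, u x ≠ 0) :
    False := by
  obtain ⟨κ, hq0, hq1⟩ := kappa_exists n lam hn2 hn4 hlam
  have hn1 : (0:ℝ) < n - 1 := by linarith
  have hn0 : (0:ℝ) < n := by linarith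
  have hn2' : (0:ℝ) < n - 2 := by linarith
  have hppos : 0 < p := by rw [hp]; positivity
  have hp1ne : p + 1 ≠ 0 := by positivity
  have hcosh_ne : ∀ t : ℝ, Real.cosh t ≠ 0 := fun t => (Real.cosh_pos t).ne'
  -- the Pohozaev-Riccati functional
  set Mf : ℝ → ℝ := fun t =>
      (Real.sinh t ^ n / Real.cosh t) *
        ((u' t ^ 2 + lam * u t ^ 2) / 2 + |u t| ^ (p+1) / (p+1) - κ * u t ^ 2)
      + ((n-2)/(2*n)) * (Real.sinh t ^ (n-1) * (n * Real.cosh t ^ 2 - Real.sinh t ^ 2)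
          / Real.cosh t ^ 2) * (u t * u' t)
      + ((n-2)/n) * (Real.sinh t ^ n * (Real.cosh t ^ 2 - Real.sinh t ^ 2)
          / Real.cosh t ^ 3) * (u t ^ 2 / 2) with hMfdef
  set Tf : ℝ → ℝ := fun t =>
      -((n-1)/n * Real.sinh t ^ (n-1) * Real.sinh t ^ 2 / Real.cosh t ^ 2) * u' t ^ 2
       + ( lam/n * Real.sinh t ^ (n-1) * (n * Real.cosh t ^ 2 - Real.sinh t ^ 2) / Real.cosh t ^ 2
         + (n-2)/(2*n) * ( Real.sinh t ^ (n-1) * (n * Real.cosh t ^ 2 - Real.sinh t ^ 2) / Real.cosh t ^ 2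
             - Real.sinh t ^ (n-1) * Real.sinh t ^ 2 * ((n+2) * Real.cosh t ^ 2 - 3 * Real.sinh t ^ 2) / Real.cosh t ^ 4 )
         - κ * Real.sinh t ^ (n-1) * (n * Real.cosh t ^ 2 - Real.sinh t ^ 2) / Real.cosh t ^ 2 ) * u t ^ 2
       - 2 * κ * (Real.sinh t ^ n / Real.cosh t) * (u t * u' t) with hTfdef
  -- derivative
  have hder : ∀ x ∈ Set.Ioo (0:ℝ) R, HasDerivAt Mf (Tf x) x := by
    intro x hx
    have hxIcc : x ∈ Set.Icc (0:ℝ) R := ⟨hx.1.le, hx.2.le⟩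
    have hU := hu x hxIcc
    have hU' := hu' x hxIcc
    have habs : HasDerivAt (fun t => |u t| ^ (p+1)) ((p+1) * |u x| ^ (p-1) * u x * u' x) x := by
      have h := (abs_rpow_hasDerivAt (p+1) (by linarith) (u x)).comp x hU
      rw [show p + 1 - 2 = p - 1 by ring] at h
      exact h
    exact deriv_main n lam p κ hn2 hn4 hp u u' u'' x hx.1 hU hU' habs (hode x hx)
  -- continuity
  have hcu : ContinuousOn u (Set.Icc 0 R) := fun x hx => ((hu x hx).continuousAt).continuousWithinAt
  have hcu' : ContinuousOn u' (Set.Icc 0 R) := fun x hx => ((hu' x hx).continuousAt).continuousWithinAt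
  have hcsn : Continuous fun t : ℝ => Real.sinh t ^ n :=
    Real.continuous_sinh.rpow_const (fun t => Or.inr (by linarith))
  have hcsn1 : Continuous fun t : ℝ => Real.sinh t ^ (n-1) :=
    Real.continuous_sinh.rpow_const (fun t => Or.inr (by linarith))
  have hcW : Continuous fun t : ℝ => Real.sinh t ^ n / Real.cosh t :=
    hcsn.div Real.continuous_cosh hcosh_ne
  have hcabs : ContinuousOn (fun t => |u t| ^ (p+1)) (Set.Icc 0 R) :=
    hcu.abs.rpow_const (fun t _ => Or.inr (by linarith))
  have hcA2 : Continuous fun t : ℝ => Real.sinh t ^ (n-1) * (n * Real.cosh t ^ 2 - Real.sinh t ^ 2) / Real.cosh t ^ 2 :=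
    (hcsn1.mul ((continuous_const.mul (Real.continuous_cosh.pow 2)).sub
      (Real.continuous_sinh.pow 2))).div (Real.continuous_cosh.pow 2)
      (fun t => pow_ne_zero 2 (hcosh_ne t))
  have hcA3 : Continuous fun t : ℝ => Real.sinh t ^ n * (Real.cosh t ^ 2 - Real.sinh t ^ 2) / Real.cosh t ^ 3 :=
    (hcsn.mul ((Real.continuous_cosh.pow 2).sub (Real.continuous_sinh.pow 2))).div
      (Real.continuous_cosh.pow 3) (fun t => pow_ne_zero 3 (hcosh_ne t))
  have hMcont : ContinuousOn Mf (Set.Icc 0 R) := by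
    apply ContinuousOn.add
    apply ContinuousOn.add
    · exact hcW.continuousOn.mul ((((hcu'.pow 2).add (continuousOn_const.mul (hcu.pow 2))).div_const 2).add
        (hcabs.div_const (p+1)) |>.sub (continuousOn_const.mul (hcu.pow 2)))
    · exact (continuous_const.mul hcA2).continuousOn.mul (hcu.mul hcu')
    · exact (continuous_const.mul hcA3).continuousOn.mul ((hcu.pow 2).div_const 2)
  have hcP : Continuous fun t : ℝ => (n-1)/n * Real.sinh t ^ (n-1) * Real.sinh t ^ 2 / Real.cosh t ^ 2 :=
    ((continuous_const.mul hcsn1).mul (Real.continuous_sinh.pow 2)).div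
      (Real.continuous_cosh.pow 2) (fun t => pow_ne_zero 2 (hcosh_ne t))
  have hcS2 : Continuous fun t : ℝ => Real.sinh t ^ (n-1) * Real.sinh t ^ 2 * ((n+2) * Real.cosh t ^ 2 - 3 * Real.sinh t ^ 2) / Real.cosh t ^ 4 :=
    ((hcsn1.mul (Real.continuous_sinh.pow 2)).mul ((continuous_const.mul (Real.continuous_cosh.pow 2)).sub
      (continuous_const.mul (Real.continuous_sinh.pow 2)))).div (Real.continuous_cosh.pow 4)
      (fun t => pow_ne_zero 4 (hcosh_ne t))
  have hcSfull : Continuous fun t : ℝ =>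
      lam/n * Real.sinh t ^ (n-1) * (n * Real.cosh t ^ 2 - Real.sinh t ^ 2) / Real.cosh t ^ 2
         + (n-2)/(2*n) * ( Real.sinh t ^ (n-1) * (n * Real.cosh t ^ 2 - Real.sinh t ^ 2) / Real.cosh t ^ 2
             - Real.sinh t ^ (n-1) * Real.sinh t ^ 2 * ((n+2) * Real.cosh t ^ 2 - 3 * Real.sinh t ^ 2) / Real.cosh t ^ 4 )
         - κ * Real.sinh t ^ (n-1) * (n * Real.cosh t ^ 2 - Real.sinh t ^ 2) / Real.cosh t ^ 2 := by
    apply Continuous.sub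
    apply Continuous.add
    · exact ((continuous_const.mul hcsn1).mul ((continuous_const.mul (Real.continuous_cosh.pow 2)).sub
        (Real.continuous_sinh.pow 2))).div (Real.continuous_cosh.pow 2)
        (fun t => pow_ne_zero 2 (hcosh_ne t))
    · exact continuous_const.mul (hcA2.sub hcS2)
    · exact ((continuous_const.mul hcsn1).mul ((continuous_const.mul (Real.continuous_cosh.pow 2)).sub
        (Real.continuous_sinh.pow 2))).div (Real.continuous_cosh.pow 2)
        (fun t => pow_ne_zero 2 (hcosh_ne t))
  have hTcont : ContinuousOn Tf (Set.Icc 0 R) := by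
    apply ContinuousOn.sub
    apply ContinuousOn.add
    · exact (hcP.neg.continuousOn).mul (hcu'.pow 2)
    · exact hcSfull.continuousOn.mul (hcu.pow 2)
    · exact ((continuous_const.mul hcW).continuousOn).mul (hcu.mul hcu')
  -- FTC
  have hTint : IntervalIntegrable Tf MeasureTheory.volume 0 R :=
    hTcont.intervalIntegrable_of_Icc hR.le
  have hFTC : ∫ x in (0:ℝ)..R, Tf x = Mf R - Mf 0 :=
    intervalIntegral.integral_eq_sub_of_hasDerivAt_of_le hR.le hMcont hder hTint
  -- endpoint values
  have hM0 : Mf 0 = 0 := by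
    have h1 : (0:ℝ) ^ n = 0 := Real.zero_rpow (by linarith)
    have h2 : (0:ℝ) ^ (n-1) = 0 := Real.zero_rpow (by linarith)
    simp [hMfdef, Real.sinh_zero, h1, h2]
  have hMR : 0 ≤ Mf R := by
    have h0 : |u R| ^ (p+1) = 0 := by rw [huR, abs_zero, Real.zero_rpow hp1ne]
    have hsR : (0:ℝ) ≤ Real.sinh R := (Real.sinh_pos_iff.2 hR).le
    have : Mf R = (Real.sinh R ^ n / Real.cosh R) * (u' R ^ 2 / 2) := by
      simp only [hMfdef, huR, abs_zero, Real.zero_rpow hp1ne]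
      ring
    rw [this]
    apply mul_nonneg (div_nonneg (Real.rpow_nonneg hsR n) (Real.cosh_pos R).le) (by positivity)
  -- pointwise nonpositivity of Tf
  have hTbound : ∀ x, 0 < x → Tf x ≤
      ( lam/n * Real.sinh x ^ (n-1) * (n * Real.cosh x ^ 2 - Real.sinh x ^ 2) / Real.cosh x ^ 2
         + (n-2)/(2*n) * ( Real.sinh x ^ (n-1) * (n * Real.cosh x ^ 2 - Real.sinh x ^ 2) / Real.cosh x ^ 2
             - Real.sinh x ^ (n-1) * Real.sinh x ^ 2 * ((n+2) * Real.cosh x ^ 2 - 3 * Real.sinh x ^ 2) / Real.cosh x ^ 4 )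
         - κ * Real.sinh x ^ (n-1) * (n * Real.cosh x ^ 2 - Real.sinh x ^ 2) / Real.cosh x ^ 2
         + n/(n-1)*κ^2 * Real.sinh x ^ (n-1) ) * u x ^ 2 := by
    intro x hx
    have hs : 0 < Real.sinh x := Real.sinh_pos_iff.2 hx
    have hc : (0:ℝ) < Real.cosh x := Real.cosh_pos x
    have hP : 0 < (n-1)/n * Real.sinh x ^ (n-1) * Real.sinh x ^ 2 / Real.cosh x ^ 2 := by
      have := Real.rpow_pos_of_pos hs (n-1)
      positivity
    have e1 : Real.sinh x ^ n = Real.sinh x ^ (n-1) * Real.sinh x := by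
      have h := Real.rpow_add hs (n-1) 1
      rw [Real.rpow_one] at h
      rw [show n - 1 + 1 = n by ring] at h
      exact h
    have hw2 : (κ * (Real.sinh x ^ n / Real.cosh x))^2
        = ((n-1)/n * Real.sinh x ^ (n-1) * Real.sinh x ^ 2 / Real.cosh x ^ 2)
          * (n/(n-1)*κ^2 * Real.sinh x ^ (n-1)) := by
      rw [e1]; field_simp
    have hsq : 0 ≤ ((n-1)/n * Real.sinh x ^ (n-1) * Real.sinh x ^ 2 / Real.cosh x ^ 2) * u' x ^ 2
        + 2 * κ * (Real.sinh x ^ n / Real.cosh x) * (u x * u' x)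
        + (n/(n-1)*κ^2 * Real.sinh x ^ (n-1)) * u x ^ 2 := by
      nlinarith [sq_nonneg (((n-1)/n * Real.sinh x ^ (n-1) * Real.sinh x ^ 2 / Real.cosh x ^ 2) * u' x
        + κ * (Real.sinh x ^ n / Real.cosh x) * u x), hw2, hP,
        sq_nonneg (u x), sq_nonneg (u' x)]
    simp only [hTfdef]
    nlinarith [hsq]
  -- nontrivial point inside the open interval
  obtain ⟨x₁, hx₁, hux₁⟩ := hnontriv
  have hx0 : ∃ x₀ ∈ Set.Ioo (0:ℝ) R, u x₀ ≠ 0 := by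
    rcases eq_or_lt_of_le hx₁.1 with h0 | h0
    · -- x₁ = 0
      have hc0 : ContinuousAt u 0 := (hu 0 ⟨le_refl 0, hR.le⟩).continuousAt
      have hne : ∀ᶠ y in nhds (0:ℝ), u y ≠ 0 := by
        rw [← h0] at hux₁
        exact hc0.eventually_ne hux₁
      have hio : Set.Ioo (0:ℝ) R ∈ nhdsWithin (0:ℝ) (Set.Ioi 0) :=
        Ioo_mem_nhdsGT_of_mem ⟨le_refl 0, hR⟩
      have := ((hne.filter_mono nhdsWithin_le_nhds).and
        (Filter.eventually_of_mem hio (fun y hy => hy))).exists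
      obtain ⟨y, hy1, hy2⟩ := this
      exact ⟨y, hy2, hy1⟩
    · rcases eq_or_lt_of_le hx₁.2 with hr | hr
      · exfalso; rw [hr] at hux₁; exact hux₁ huR
      · exact ⟨x₁, ⟨h0, hr⟩, hux₁⟩
  obtain ⟨x₀, hx₀, hux₀⟩ := hx0
  -- strict integral inequality
  have hTle : ∀ x ∈ Set.Ioc (0:ℝ) R, Tf x ≤ 0 := by
    intro x hx
    calc Tf x ≤ _ * u x ^ 2 := hTbound x hx.1
      _ ≤ 0 := mul_nonpos_of_nonpos_of_nonneg
          (bracket_neg n lam κ x hn2 hn4 hx.1 hq0 hq1).le (sq_nonneg _)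
  have hTx₀ : Tf x₀ < 0 := by
    have hu2 : 0 < u x₀ ^ 2 := by
      rcases (sq_nonneg (u x₀)).lt_or_eq with h | h
      · exact h
      · exfalso; exact hux₀ (by nlinarith [sq_nonneg (u x₀), h.symm])
    calc Tf x₀ ≤ _ * u x₀ ^ 2 := hTbound x₀ hx₀.1
      _ < 0 := mul_neg_of_neg_of_pos
          (bracket_neg n lam κ x₀ hn2 hn4 hx₀.1 hq0 hq1) hu2
  have hstrict : ∫ x in (0:ℝ)..R, Tf x < ∫ x in (0:ℝ)..R, (0:ℝ) := by
    apply intervalIntegral.integral_lt_integral_of_continuousOn_of_le_of_exists_lt hR hTcont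
      continuousOn_const hTle
    exact ⟨x₀, ⟨hx₀.1.le, hx₀.2.le⟩, hTx₀⟩
  rw [intervalIntegral.integral_zero, hFTC, hM0, sub_zero] at hstrict
  linarith
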